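/- Let K be a closed, bounded, convex, symmetric subset of R^n with nonempty interior, and let E_K denote its John ellipsoid (the solid ellipsoid of largest volume contained in K, centered at the origin by symmetry). Then E_K ⊂ K ⊂ √n · E_K. -/

import Mathlib

open MeasureTheory
open scoped Pointwise

open scoped RealInnerProductSpace

set_option maxHeartbeats 1000000

noncomputable section

def scaleEquiv {n : ℕ} (d : Fin n → ℝ) (hd : ∀ i, d i ≠ 0) :
    EuclideanSpace ℝ (Fin n) ≃ₗ[ℝ] EuclideanSpace ℝ (Fin n) where
  toFun y := WithLp.toLp 2 (fun i => d i * y i)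
  invFun y := WithLp.toLp 2 (fun i => (d i)⁻¹ * y i)
  map_add' x y := by ext i; simp [mul_add]
  map_smul' c x := by ext i; simp [smul_eq_mul]; ring
  left_inv y := by ext i; simp; field_simp [hd i]
  right_inv y := by ext i; simp; field_simp [hd i]

lemma scaleEquiv_apply {n : ℕ} (d : Fin n → ℝ) (hd : ∀ i, d i ≠ 0)
    (y : EuclideanSpace ℝ (Fin n)) (i : Fin n) : scaleEquiv d hd y i = d i * y i := rfl

lemma scaleEquiv_det {n : ℕ} (d : Fin n → ℝ) (hd : ∀ i, d i ≠ 0) :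
    LinearMap.det (scaleEquiv d hd).toLinearMap = ∏ i, d i := by
  classical
  let b := PiLp.basisFun 2 ℝ (Fin n)
  rw [← LinearMap.det_toMatrix b, ← Matrix.det_diagonal]
  congr 1
  ext i j
  simp [LinearMap.toMatrix_apply, Matrix.diagonal, scaleEquiv_apply, b,
    EuclideanSpace.single_apply]

lemma euc_normsq {n : ℕ} (w : EuclideanSpace ℝ (Fin n)) : ‖w‖^2 = ∑ i, (w i)^2 := by
  rw [EuclideanSpace.norm_eq, Real.sq_sqrt (by positivity)]
  simp [sq_abs]


lemma bern (m : ℝ) (hm : 0 ≤ m) : ∀ (k : ℕ) (ε : ℝ), 0 ≤ ε → (k+1) * ε ≤ m →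
    m^(k+1) - (k+1)*ε*m^k ≤ (m-ε)^(k+1) := by
  intro k
  induction k with
  | zero => intro ε h1 h2; simp
  | succ k ih =>
    intro ε h1 h2
    have hk : (k+1:ℝ)*ε ≤ m := by push_cast at h2 ⊢; nlinarith
    have h3 := ih ε h1 hk
    have e2 : m^(k+1) = m * m^k := pow_succ' m k
    have e1 : m^(k+1+1) = m * m^(k+1) := pow_succ' m (k+1)
    have hmk : (0:ℝ) ≤ m^k := pow_nonneg hm k
    have h4 : 0 ≤ m^(k+1) - (k+1)*ε*m^k := by
      have : (k+1:ℝ)*ε*m^k ≤ m*m^k := mul_le_mul_of_nonneg_right hk hmk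
      linarith
    have h5 : 0 ≤ m - ε := by nlinarith
    have h6 : (m-ε) * (m^(k+1) - (k+1)*ε*m^k) ≤ (m-ε)^(k+1+1) := by
      rw [pow_succ]
      calc (m-ε) * (m^(k+1) - (k+1)*ε*m^k) = (m^(k+1) - (k+1)*ε*m^k) * (m-ε) := by ring
      _ ≤ (m-ε)^(k+1) * (m-ε) := mul_le_mul_of_nonneg_right h3 h5
    refine le_trans ?_ h6
    push_cast
    nlinarith [mul_nonneg (mul_nonneg h1 h1) hmk]

lemma keyineq (k : ℕ) (m ε : ℝ) (hm0 : 0 < m) (hε0 : 0 < ε)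
    (hgap : (k:ℝ)*ε < m - k) : m^k < (1+ε)*(m-ε)^k := by
  cases k with
  | zero => simp; nlinarith
  | succ j =>
    push_cast at hgap
    have hj : (0:ℝ) ≤ (j:ℝ) := Nat.cast_nonneg j
    have hkε : ((j:ℝ)+1) * ε ≤ m := by nlinarith
    have hb := bern m hm0.le j ε hε0.le hkε
    have hmj : 0 < m^j := pow_pos hm0 j
    have e2 : m^(j+1) = m * m^j := pow_succ' m j
    have hpos : 0 < m - ((j:ℝ)+1) - ((j:ℝ)+1)*ε := by nlinarith
    have step : m^(j+1) < (1+ε) * (m^(j+1) - ((j:ℝ)+1)*ε*m^j) := by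
      nlinarith [mul_pos (mul_pos hε0 hmj) hpos]
    push_cast
    refine lt_of_lt_of_le step (mul_le_mul_of_nonneg_left ?_ (by linarith))
    push_cast at hb; linarith


/-- Core real inequality: a point of the stretched ellipsoid is a convex combination
of `±x` and a point of the unit ball. -/
lemma exists_t (s α β c δ2 : ℝ) (hs : 1 < s) (hα1 : 1 ≤ α) (hαs : α < s^2)
    (hβ : β * (s^2 - 1) = s^2 - α) (hc : 0 ≤ c) (hca : c^2 ≤ α) (hδ : 0 ≤ δ2)
    (hd : δ2 * α ≤ β * (α - c^2)) :
    ∃ t, 0 ≤ t ∧ t < 1 ∧ (c - t*s)^2 + δ2 ≤ (1-t)^2 := by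
  have hs0 : (0:ℝ) < s := by linarith
  have hq : (0:ℝ) < s^2 - 1 := by nlinarith
  have hα0 : (0:ℝ) < α := by linarith
  have hβ0 : (0:ℝ) ≤ β := by nlinarith
  by_cases hcs : c * s ≤ 1
  · refine ⟨0, le_refl _, one_pos, ?_⟩
    have h1 : δ2 ≤ β * (α - c^2) / α := (le_div_iff₀ hα0).2 hd
    have h2 : c^2 + δ2 ≤ 1 := by
      have hcss : c^2 * s^2 ≤ 1 := by nlinarith [mul_nonneg hc hs0.le]
      rw [div_eq_mul_inv] at h1
      have key : c^2 + β * (α - c^2) * α⁻¹ ≤ 1 := by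
        rw [← sub_nonneg]
        have expand : 1 - (c^2 + β * (α - c^2) * α⁻¹)
            = (α - β*(α - c^2) - c^2*α) / α := by field_simp; ring
        rw [expand]
        apply div_nonneg _ hα0.le
        -- β*(s²-1) = s²-α ;  want α - β(α-c²) - c²α ≥ 0
        nlinarith [sq_nonneg (α - 1), mul_nonneg hβ0 (sq_nonneg c)]
      linarith
    simpa using h2
  · push_neg at hcs
    set t := (c*s - 1)/(s^2 - 1) with ht
    have hcsq : c^2 < s^2 := lt_of_le_of_lt hca hαs
    have hcls : c < s := by nlinarith
    have ht0 : 0 ≤ t := div_nonneg (by linarith) hq.le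
    have ht1 : t < 1 := by rw [ht, div_lt_one hq]; nlinarith
    refine ⟨t, ht0, ht1, ?_⟩
    have key : δ2 * (s^2 - 1) ≤ (s - c)^2 := by
      nlinarith [sq_nonneg (α - c*s), mul_nonneg hδ (sq_nonneg c)]
    have e1 : c - t*s = (s - c)/(s^2-1) := by rw [ht]; field_simp; ring
    have e2 : 1 - t = s*(s-c)/(s^2-1) := by rw [ht]; field_simp; ring
    rw [e1, e2, div_pow, div_pow]
    rw [div_add' _ _ _ (by positivity), div_le_div_iff₀ (by positivity) (by positivity)]
    nlinarith [mul_le_mul_of_nonneg_right key (le_of_lt hq), sq_nonneg (s-c), sq_nonneg ((s-c)*(s^2-1))]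

lemma johnCore {n : ℕ} (hn : 0 < n) (K : Set (EuclideanSpace ℝ (Fin n)))
    (hconv : Convex ℝ K) (hsymm : ∀ x ∈ K, -x ∈ K)
    (hball : Metric.closedBall 0 1 ⊆ K)
    (hmax : ∀ T : EuclideanSpace ℝ (Fin n) ≃ₗ[ℝ] EuclideanSpace ℝ (Fin n),
      (T '' Metric.closedBall 0 1) ⊆ K →
      volume (T '' Metric.closedBall 0 1) ≤ volume (Metric.closedBall (0:EuclideanSpace ℝ (Fin n)) 1))
    (x : EuclideanSpace ℝ (Fin n)) (hx : x ∈ K) : ‖x‖ ≤ Real.sqrt n := by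
  classical
  by_contra hcon
  push_neg at hcon
  set B := Metric.closedBall (0 : EuclideanSpace ℝ (Fin n)) 1 with hB
  set s := ‖x‖ with hsdef
  have hn1 : (1:ℝ) ≤ (n:ℝ) := by exact_mod_cast hn
  have hsqn : (1:ℝ) ≤ Real.sqrt n := by
    rw [show (1:ℝ) = Real.sqrt 1 by simp]; exact Real.sqrt_le_sqrt hn1
  have hs1 : 1 < s := lt_of_le_of_lt hsqn hcon
  have hs0 : 0 < s := by linarith
  have hs2 : (n:ℝ) < s^2 := by
    have := (Real.sqrt_lt' hs0).1 hcon
    -- Real.sqrt_lt' : 0 < y → (sqrt x < y ↔ x < y ^ 2)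
    exact this
  set k := n - 1 with hkdef
  have hnk : n = k + 1 := (Nat.succ_pred_eq_of_pos hn).symm
  have hkcast : ((k:ℝ)+1) = (n:ℝ) := by rw [hnk]; push_cast; ring
  set m := s^2 - 1 with hmdef
  have hmk : (k:ℝ) < m := by rw [hmdef]; linarith only [hs2, hkcast]
  have hk0 : (0:ℝ) ≤ (k:ℝ) := Nat.cast_nonneg k
  have hm0 : 0 < m := by linarith
  set ε := (m - k)/(2*((k:ℝ)+1)) with hεdef
  have hden : (0:ℝ) < 2*((k:ℝ)+1) := by positivity
  have hε0 : 0 < ε := div_pos (by linarith) hden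
  have hgap : (k:ℝ)*ε < m - k := by
    rw [hεdef, ← mul_div_assoc, div_lt_iff₀ hden]
    nlinarith only [mul_pos (show (0:ℝ) < m - k by linarith only [hmk])
      (show (0:ℝ) < (k:ℝ) + 2 by linarith only [hk0])]
  have hεm : ε < m := by rw [hεdef, div_lt_iff₀ hden]; nlinarith only [hm0, hk0, mul_nonneg hk0 hm0.le, hmk]
  set α := 1 + ε with hαdef
  set β := (m - ε)/m with hβdef
  have hα1 : 1 ≤ α := by rw [hαdef]; linarith
  have hα0 : 0 < α := by linarith
  have hαs : α < s^2 := by rw [hαdef, hmdef] at *; linarith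
  have hβ0 : 0 < β := div_pos (by linarith) hm0
  have hβeq : β * (s^2 - 1) = s^2 - α := by
    rw [hβdef, hαdef, ← hmdef, div_mul_cancel₀ _ hm0.ne', hmdef]; ring
  set a := Real.sqrt α with hadef
  set b := Real.sqrt β with hbdef
  have ha2 : a^2 = α := Real.sq_sqrt hα0.le
  have hb2 : b^2 = β := Real.sq_sqrt hβ0.le
  have ha0 : 0 < a := Real.sqrt_pos.2 hα0
  have hb0 : 0 < b := Real.sqrt_pos.2 hβ0
  -- the key volume inequality
  have hkey : 1 < α * β^k := by
    have h1 := keyineq k m ε hm0 hε0 hgap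
    have hmk0 : 0 < m^k := pow_pos hm0 k
    rw [hβdef, div_pow, mul_div_assoc', lt_div_iff₀ hmk0, one_mul]
    rw [hαdef]; exact h1
  -- construct things
  set i0 : Fin n := ⟨0, hn⟩ with hi0
  set u := s⁻¹ • x with hudef
  have hu : ‖u‖ = 1 := by
    rw [hudef, norm_smul, norm_inv, Real.norm_eq_abs, abs_of_pos hs0, ← hsdef,
      inv_mul_cancel₀ (ne_of_gt hs0)]
  have hux : s • u = x := by rw [hudef, smul_smul, mul_inv_cancel₀ (ne_of_gt hs0), one_smul]
  -- orthonormal basis extending u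
  have horth : Orthonormal ℝ (Set.restrict {i0} (fun _ : Fin n => u)) := by
    rw [orthonormal_iff_ite]
    intro i j
    have hij : i = j := Subsingleton.elim i j
    subst hij
    rw [if_pos rfl]; show ⟪u, u⟫ = 1; rw [real_inner_self_eq_norm_sq, hu, one_pow]
  obtain ⟨v, hv⟩ := horth.exists_orthonormalBasis_extension_of_card_eq
    (by simp [finrank_euclideanSpace]) 
  have hvi0 : v i0 = u := hv i0 rfl
  set d : Fin n → ℝ := fun i => if i = i0 then a else b with hddef
  have hd : ∀ i, d i ≠ 0 := by
    intro i; rw [hddef]; dsimp only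
    split
    · exact ne_of_gt ha0
    · exact ne_of_gt hb0
  set D := scaleEquiv d hd with hDdef
  set T := v.repr.toLinearEquiv ≪≫ₗ D ≪≫ₗ v.repr.symm.toLinearEquiv with hTdef
  have hprodd : ∏ i, d i = a * b^k := by
    rw [← Finset.mul_prod_erase Finset.univ d (Finset.mem_univ i0)]
    have h1 : d i0 = a := by rw [hddef]; simp
    have h2 : ∏ i ∈ Finset.univ.erase i0, d i = b^k := by
      rw [Finset.prod_congr rfl (fun i hi => show d i = b by
        rw [hddef]; exact if_neg (Finset.ne_of_mem_erase hi))]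
      rw [Finset.prod_const, Finset.card_erase_of_mem (Finset.mem_univ i0),
        Finset.card_univ, Fintype.card_fin]
    rw [h1, h2]
  have hdet : LinearMap.det T.toLinearMap = a * b^k := by
    have e : T.toLinearMap =
        (v.repr.symm.toLinearEquiv : EuclideanSpace ℝ (Fin n) →ₗ[ℝ] EuclideanSpace ℝ (Fin n)) ∘ₗ
        D.toLinearMap ∘ₗ
        (v.repr.symm.toLinearEquiv.symm : EuclideanSpace ℝ (Fin n) →ₗ[ℝ] EuclideanSpace ℝ (Fin n)) := by
      rfl
    rw [e, LinearMap.det_conj, scaleEquiv_det, hprodd]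
  have hTB : T '' B ⊆ K := by
    rintro y ⟨z, hz, rfl⟩
    simp only [hB, Metric.mem_closedBall, dist_zero_right] at hz
    set ζ := v.repr z with hζdef
    have hζn : ‖ζ‖ ≤ 1 := by rw [hζdef, LinearIsometryEquiv.norm_map]; exact hz
    have hTz : v.repr (T z) = D ζ := by
      rw [hTdef]
      simp [LinearEquiv.trans_apply]; exact hζdef.symm
    set ζ0 := ζ i0 with hζ0def
    have hζ0 : ζ0^2 ≤ ‖ζ‖^2 := by
      rw [euc_normsq]
      exact Finset.single_le_sum (fun i _ => sq_nonneg (ζ i)) (Finset.mem_univ i0)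
    set c₀ := a * ζ0 with hc₀def
    have hinner : ⟪u, T z⟫ = c₀ := by
      rw [← hvi0, ← OrthonormalBasis.repr_apply_apply, hTz]
      show d i0 * ζ i0 = c₀
      rw [hddef]; simp [hc₀def]; exact Or.inl hζ0def.symm
    have hnormTz : ‖T z‖^2 = α * ζ0^2 + β * (‖ζ‖^2 - ζ0^2) := by
      have h0 : ‖T z‖ = ‖D ζ‖ := by rw [← hTz, LinearIsometryEquiv.norm_map]
      have hsplit : ∑ i, ((D ζ) i)^2 = (d i0 * ζ0)^2 + ∑ i ∈ Finset.univ.erase i0, (d i * ζ i)^2 := by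
        rw [← Finset.add_sum_erase Finset.univ _ (Finset.mem_univ i0)]
        simp only [hDdef, scaleEquiv_apply, ← hζ0def]
      have hζsplit : ∑ i, (ζ i)^2 = ζ0^2 + ∑ i ∈ Finset.univ.erase i0, (ζ i)^2 := by
        rw [← Finset.add_sum_erase Finset.univ _ (Finset.mem_univ i0)]
      have herase : ∑ i ∈ Finset.univ.erase i0, (d i * ζ i)^2
          = β * ∑ i ∈ Finset.univ.erase i0, (ζ i)^2 := by
        rw [Finset.mul_sum]
        refine Finset.sum_congr rfl (fun i hi => ?_)
        have : d i = b := by rw [hddef]; exact if_neg (Finset.ne_of_mem_erase hi)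
        rw [this, mul_pow, hb2]
      have hdio : d i0 = a := by rw [hddef]; simp
      rw [h0, euc_normsq, hsplit, herase, hdio]
      have h2 : ‖ζ‖^2 = ∑ i, (ζ i)^2 := euc_normsq ζ
      rw [h2, hζsplit, mul_pow, ha2]
      ring
    set p := T z - c₀ • u with hpdef
    have hup : ⟪u, p⟫ = 0 := by
      rw [hpdef, inner_sub_right, hinner, real_inner_smul_right, real_inner_self_eq_norm_sq,
        hu]
      ring
    have hpn : ‖p‖^2 = ‖T z‖^2 - c₀^2 := by
      rw [hpdef, norm_sub_sq_real, real_inner_smul_right, real_inner_comm, hinner,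
        norm_smul, Real.norm_eq_abs]
      rw [hu, mul_pow, sq_abs]
      ring
    set δ2 := ‖p‖^2 with hδ2def
    set c := a * |ζ0| with hcdef
    have hc : 0 ≤ c := mul_nonneg ha0.le (abs_nonneg _)
    have hceq : c^2 = α * ζ0^2 := by rw [hcdef, mul_pow, sq_abs, ha2]
    have hζn2 : ‖ζ‖^2 ≤ 1 := pow_le_one₀ (norm_nonneg ζ) hζn
    have hca : c^2 ≤ α := by
      rw [hceq]
      nlinarith only [mul_nonneg hα0.le (show (0:ℝ) ≤ 1 - ζ0^2 by linarith only [hζ0, hζn2])]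
    have hδ2 : δ2 = β * (‖ζ‖^2 - ζ0^2) := by
      rw [hpn, hnormTz, hc₀def, mul_pow, ha2]; ring
    have hδ0 : 0 ≤ δ2 := by rw [hδ2def]; positivity
    have hdd : δ2 * α ≤ β * (α - c^2) := by
      rw [hδ2, hceq]
      have key : ‖ζ‖^2 - ζ0^2 ≤ 1 - ζ0^2 := by linarith only [hζn2]
      nlinarith only [mul_le_mul_of_nonneg_left key (mul_nonneg hα0.le hβ0.le)]
    obtain ⟨t, ht0, ht1, hineq⟩ := exists_t s α β c δ2 hs1 hα1 hαs hβeq hc hca hδ0 hdd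
    set σ : ℝ := if 0 ≤ ζ0 then 1 else -1 with hσdef
    have hσ2 : σ * σ = 1 := by rw [hσdef]; split <;> norm_num
    have hσc : σ * c₀ = c := by
      rw [hσdef, hc₀def, hcdef]
      split
      · next h => rw [abs_of_nonneg h]; ring
      · next h => push_neg at h; rw [abs_of_neg h]; ring
    have hσxK : σ • x ∈ K := by
      rw [hσdef]
      split
      · rw [one_smul]; exact hx
      · rw [neg_one_smul]; exact hsymm x hx
    set q := T z - (t*σ) • x with hqdef
    have hTzdecomp : T z = c₀ • u + p := by rw [hpdef]; abel
    have hqd : q = (c₀ - t*σ*s) • u + p := by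
      rw [hqdef, hTzdecomp, ← hux]
      module
    have hqn2 : ‖q‖^2 = (c₀ - t*σ*s)^2 + δ2 := by
      rw [hqd, norm_add_sq_real, real_inner_smul_left, hup, mul_zero, norm_smul,
        Real.norm_eq_abs, hu, mul_one, sq_abs, hδ2def]
      ring
    have hsq : (c₀ - t*σ*s)^2 = (c - t*s)^2 := by
      rw [← hσc]
      linear_combination (t^2*s^2 - c₀^2) * hσ2
    have hqle : ‖q‖ ≤ 1 - t := by
      have h1 : ‖q‖^2 ≤ (1-t)^2 := by rw [hqn2, hsq]; exact hineq
      have h2 := Real.sqrt_le_sqrt h1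
      rwa [Real.sqrt_sq (norm_nonneg q), Real.sqrt_sq (by linarith only [ht1] : (0:ℝ) ≤ 1-t)] at h2
    have h1t : 0 < 1 - t := by linarith
    set w := (1-t)⁻¹ • q with hwdef
    have hwK : w ∈ K := by
      apply hball
      rw [hB, Metric.mem_closedBall, dist_zero_right, hwdef, norm_smul, norm_inv,
        Real.norm_eq_abs, abs_of_pos h1t]
      have h2 := mul_le_mul_of_nonneg_left hqle (inv_nonneg.2 h1t.le)
      simpa [inv_mul_cancel₀ (ne_of_gt h1t)] using h2
    have hcombo : T z = t • (σ • x) + (1-t) • w := by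
      rw [hwdef, smul_inv_smul₀ (ne_of_gt h1t), hqdef, smul_smul]
      abel
    rw [hcombo]
    exact hconv hσxK hwK ht0 (by linarith) (by ring)
  have hle := hmax T hTB
  have habk : 0 < a * b^k := mul_pos ha0 (pow_pos hb0 k)
  have hvol : volume (T '' B) = ENNReal.ofReal (a*b^k) * volume B := by
    have h := MeasureTheory.Measure.addHaar_image_linearMap
      (volume : Measure (EuclideanSpace ℝ (Fin n))) T.toLinearMap B
    rw [hdet, abs_of_pos habk] at h
    simpa using h
  have hBpos : volume B ≠ 0 := (Metric.measure_closedBall_pos volume _ one_pos).ne'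
  have hBfin : volume B ≠ ⊤ := measure_closedBall_lt_top.ne
  rw [hvol] at hle
  have h1 : ENNReal.ofReal (a*b^k) ≤ 1 := by
    refine (ENNReal.mul_le_mul_iff_left hBpos hBfin).1 ?_
    simpa using hle
  rw [ENNReal.ofReal_le_one] at h1
  have h3 : (a*b^k)^2 = α * β^k := by
    rw [mul_pow, ← pow_mul, mul_comm k 2, pow_mul, ha2, hb2]
  linarith only [pow_le_one₀ (n := 2) habk.le h1, h3, hkey]

/-- A (solid, origin-centered) ellipsoid in `ℝ^n`: the image of the closed Euclidean unit
ball under an invertible linear map. -/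
def IsEllipsoid {n : ℕ} (S : Set (EuclideanSpace ℝ (Fin n))) : Prop :=
  ∃ A : EuclideanSpace ℝ (Fin n) ≃ₗ[ℝ] EuclideanSpace ℝ (Fin n),
    S = A '' Metric.closedBall 0 1

/-- John's theorem for symmetric convex bodies: if `K ⊆ ℝ^n` is closed, bounded, convex
and symmetric with nonempty interior, and `E_K ⊆ K` is an ellipsoid of maximal volume
among the ellipsoids contained in `K`, then `E_K ⊆ K ⊆ √n · E_K`. -/
theorem stmt17 {n : ℕ} (hn : 0 < n) (K EK : Set (EuclideanSpace ℝ (Fin n)))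
    (hclosed : IsClosed K) (hbdd : Bornology.IsBounded K) (hconv : Convex ℝ K)
    (hsymm : ∀ x ∈ K, -x ∈ K) (hint : (interior K).Nonempty)
    (hEK : IsEllipsoid EK) (hEKsub : EK ⊆ K)
    (hEKmax : ∀ E' : Set (EuclideanSpace ℝ (Fin n)),
      IsEllipsoid E' → E' ⊆ K → volume E' ≤ volume EK) :
    EK ⊆ K ∧ K ⊆ (Real.sqrt n) • EK := by
  obtain ⟨A, hA⟩ := hEK
  refine ⟨hEKsub, ?_⟩
  set B := Metric.closedBall (0 : EuclideanSpace ℝ (Fin n)) 1 with hB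
  set K' := ⇑A.symm '' K with hK'
  have hballK' : B ⊆ K' := by
    intro z hz
    have h1 : A z ∈ EK := by rw [hA]; exact Set.mem_image_of_mem _ hz
    exact ⟨A z, hEKsub h1, by simp⟩
  have hconv' : Convex ℝ K' := by
    have := hconv.linear_image A.symm.toLinearMap
    simpa using this
  have hsymm' : ∀ y ∈ K', -y ∈ K' := by
    rintro y ⟨z, hzK, rfl⟩
    exact ⟨-z, hsymm z hzK, by simp⟩
  have hdetA : LinearMap.det A.toLinearMap ≠ 0 := by
    have := LinearEquiv.isUnit_det' A
    simpa [isUnit_iff_ne_zero] using this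
  have hfac0 : ENNReal.ofReal |LinearMap.det A.toLinearMap| ≠ 0 := by
    rw [ne_eq, ENNReal.ofReal_eq_zero, not_le]
    exact abs_pos.2 hdetA
  have hfact : ENNReal.ofReal |LinearMap.det A.toLinearMap| ≠ ⊤ := ENNReal.ofReal_ne_top
  have hmax' : ∀ T : EuclideanSpace ℝ (Fin n) ≃ₗ[ℝ] EuclideanSpace ℝ (Fin n),
      (T '' B) ⊆ K' → volume (T '' B) ≤ volume B := by
    intro T hT
    have hsub : (T ≪≫ₗ A) '' B ⊆ K := by
      rintro y ⟨z, hz, rfl⟩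
      have h1 : T z ∈ K' := hT (Set.mem_image_of_mem _ hz)
      obtain ⟨w, hwK, hw⟩ := h1
      have : (T ≪≫ₗ A) z = A (T z) := rfl
      rw [this, ← hw]
      simpa using hwK
    have h := hEKmax _ ⟨T ≪≫ₗ A, rfl⟩ hsub
    rw [hA] at h
    have e1 : (T ≪≫ₗ A) '' B = ⇑A '' (T '' B) := by
      rw [Set.image_image]; rfl
    rw [e1] at h
    have e2 := MeasureTheory.Measure.addHaar_image_linearMap
      (volume : Measure (EuclideanSpace ℝ (Fin n))) A.toLinearMap (T '' B)
    have e3 := MeasureTheory.Measure.addHaar_image_linearMap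
      (volume : Measure (EuclideanSpace ℝ (Fin n))) A.toLinearMap B
    simp only [LinearEquiv.coe_coe] at e2 e3
    rw [e2, e3] at h
    exact (ENNReal.mul_le_mul_iff_right hfac0 hfact).1 h
  intro x hxK
  have h1 : A.symm x ∈ K' := ⟨x, hxK, rfl⟩
  have h2 : ‖A.symm x‖ ≤ Real.sqrt n := johnCore hn K' hconv' hsymm' hballK' hmax' _ h1
  have h3 : A.symm x ∈ Real.sqrt n • B := by
    rw [hB, smul_unitClosedBall, Real.norm_eq_abs, abs_of_nonneg (Real.sqrt_nonneg _)]
    simpa [Metric.mem_closedBall] using h2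
  rw [hA, ← image_smul_set]
  exact ⟨A.symm x, h3, by simp⟩
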